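/- Let φ_n^α(c) = 2√(nc) − απ/2 − π/4. For every real c > 0 and real α, the expression cos(φ_{n−1}^α(c))·cos(φ_n^α(c)) + cos(φ_{n−2}^{α+1}(c))·cos(φ_{n−1}^{α+1}(c)) tends to 1 as n → ∞. -/

import Mathlib

open Real Filter

/-- φ_n^α(c) = 2√(nc) − απ/2 − π/4, with `n` a real variable. -/
noncomputable def phi (n α c : ℝ) : ℝ :=
  2 * Real.sqrt (n * c) - α * Real.pi / 2 - Real.pi / 4

lemma sqrt_diff_tendsto (c : ℝ) (hc : 0 < c) (d : ℝ) :
    Tendsto (fun n : ℕ => Real.sqrt (((n : ℝ) - d) * c) - Real.sqrt ((n : ℝ) * c))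
      atTop (nhds 0) := by
  have hden : Tendsto (fun n : ℕ => Real.sqrt (((n : ℝ) - d) * c) + Real.sqrt ((n : ℝ) * c))
      atTop atTop := by
    apply tendsto_atTop_mono (fun n => le_add_of_nonneg_left (Real.sqrt_nonneg _))
    have hs : Tendsto Real.sqrt atTop atTop := by
      refine tendsto_atTop_atTop.2 fun b => ⟨max 0 b ^ 2, fun a ha => ?_⟩
      calc b ≤ max 0 b := le_max_right 0 b
        _ = Real.sqrt (max 0 b ^ 2) := (Real.sqrt_sq (le_max_left 0 b)).symm
        _ ≤ Real.sqrt a := Real.sqrt_le_sqrt ha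
    exact hs.comp (Tendsto.atTop_mul_const hc tendsto_natCast_atTop_atTop)
  have h0 : Tendsto (fun n : ℕ =>
      (-(d * c)) / (Real.sqrt (((n : ℝ) - d) * c) + Real.sqrt ((n : ℝ) * c)))
      atTop (nhds 0) := tendsto_const_nhds.div_atTop hden
  refine h0.congr' ?_
  filter_upwards [eventually_ge_atTop (⌈d⌉₊ + 1)] with n hn
  have hn1 : (⌈d⌉₊ : ℝ) + 1 ≤ (n : ℝ) := by exact_mod_cast hn
  have hnd : (0 : ℝ) ≤ (n : ℝ) - d := by linarith [Nat.le_ceil d]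
  have hnpos : (0 : ℝ) < (n : ℝ) := by
    have : (0:ℝ) ≤ (⌈d⌉₊ : ℝ) := Nat.cast_nonneg _
    linarith
  have hx : (0 : ℝ) ≤ ((n : ℝ) - d) * c := mul_nonneg hnd hc.le
  have hy : (0 : ℝ) ≤ (n : ℝ) * c := mul_nonneg hnpos.le hc.le
  have hpos : 0 < Real.sqrt (((n : ℝ) - d) * c) + Real.sqrt ((n : ℝ) * c) := by
    have : 0 < Real.sqrt ((n : ℝ) * c) := Real.sqrt_pos.2 (mul_pos hnpos hc)
    linarith [Real.sqrt_nonneg (((n : ℝ) - d) * c)]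
  have ha := Real.sq_sqrt hx
  have hb := Real.sq_sqrt hy
  rw [div_eq_iff hpos.ne']
  nlinarith [ha, hb]

theorem stmt7 (c : ℝ) (hc : 0 < c) (α : ℝ) :
    Tendsto (fun n : ℕ =>
        Real.cos (phi ((n : ℝ) - 1) α c) * Real.cos (phi (n : ℝ) α c) +
          Real.cos (phi ((n : ℝ) - 2) (α + 1) c) * Real.cos (phi ((n : ℝ) - 1) (α + 1) c))
      atTop (nhds 1) := by
  have hshift : ∀ m : ℝ, Real.cos (phi m (α + 1) c) = Real.sin (phi m α c) := by
    intro m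
    have : phi m (α + 1) c = phi m α c - Real.pi / 2 := by unfold phi; ring
    rw [this, Real.cos_sub_pi_div_two]
  -- difference of phis
  have hphidiff : ∀ d : ℝ, Tendsto
      (fun n : ℕ => phi ((n : ℝ) - d) α c - phi (n : ℝ) α c) atTop (nhds 0) := by
    intro d
    have h := (sqrt_diff_tendsto c hc d).const_mul 2
    have heq : (fun n : ℕ => phi ((n : ℝ) - d) α c - phi (n : ℝ) α c)
        = fun n : ℕ => 2 * (Real.sqrt (((n : ℝ) - d) * c) - Real.sqrt ((n : ℝ) * c)) := by
      funext n; unfold phi; ring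
    rw [heq]
    simpa using h
  -- main decomposition
  have key : ∀ n : ℕ,
      Real.cos (phi ((n : ℝ) - 1) α c) * Real.cos (phi (n : ℝ) α c) +
        Real.cos (phi ((n : ℝ) - 2) (α + 1) c) * Real.cos (phi ((n : ℝ) - 1) (α + 1) c)
      = Real.cos (phi ((n : ℝ) - 1) α c - phi (n : ℝ) α c) +
        Real.sin (phi ((n : ℝ) - 1) α c) *
          (Real.sin (phi ((n : ℝ) - 2) α c) - Real.sin (phi (n : ℝ) α c)) := by
    intro n
    rw [hshift, hshift, Real.cos_sub]
    ring
  have h1 : Tendsto (fun n : ℕ => Real.cos (phi ((n : ℝ) - 1) α c - phi (n : ℝ) α c))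
      atTop (nhds 1) := by
    have := (Real.continuous_cos.tendsto 0).comp (hphidiff 1)
    simpa [Function.comp_def] using this
  have h2 : Tendsto (fun n : ℕ => Real.sin (phi ((n : ℝ) - 1) α c) *
      (Real.sin (phi ((n : ℝ) - 2) α c) - Real.sin (phi (n : ℝ) α c))) atTop (nhds 0) := by
    have hg : Tendsto (fun n : ℕ => |phi ((n : ℝ) - 2) α c - phi (n : ℝ) α c|)
        atTop (nhds 0) := by simpa using (hphidiff 2).abs
    refine squeeze_zero_norm (fun n => ?_) hg
    · have habs : ∀ X Y : ℝ, |Real.sin X - Real.sin Y| ≤ |X - Y| := by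
        intro X Y
        rw [Real.sin_sub_sin, abs_mul, abs_mul, abs_two]
        have h1 : |Real.sin ((X - Y) / 2)| ≤ |X - Y| / 2 := by
          simpa [abs_div] using Real.abs_sin_le_abs (x := (X - Y) / 2)
        have h2 : |Real.cos ((X + Y) / 2)| ≤ 1 := Real.abs_cos_le_one _
        nlinarith [abs_nonneg (Real.sin ((X - Y) / 2)), abs_nonneg (Real.cos ((X + Y) / 2))]
      have hl : |Real.sin (phi ((n : ℝ) - 2) α c) - Real.sin (phi (n : ℝ) α c)| ≤
          |phi ((n : ℝ) - 2) α c - phi (n : ℝ) α c| := habs _ _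
      calc ‖Real.sin (phi ((n : ℝ) - 1) α c) *
            (Real.sin (phi ((n : ℝ) - 2) α c) - Real.sin (phi (n : ℝ) α c))‖
          = |Real.sin (phi ((n : ℝ) - 1) α c)| *
            |Real.sin (phi ((n : ℝ) - 2) α c) - Real.sin (phi (n : ℝ) α c)| := by
            simp [abs_mul]
        _ ≤ 1 * |phi ((n : ℝ) - 2) α c - phi (n : ℝ) α c| := by
            apply mul_le_mul (Real.abs_sin_le_one _) hl (abs_nonneg _) zero_le_one
        _ = _ := one_mul _
  have := h1.add h2
  simpa [key] using this
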